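/- arXiv:1207.4598 — 2 statements merged into one kernel-verified Lean document; each statement's English description precedes it below -/
import Mathlib

section
/- 2D hypervolume formula: if p_1, ..., p_n ∈ [0,1]^2 are points with strictly decreasing second coordinates and strictly increasing first coordinates (a 2D Pareto front sorted by x), then the area of ⋃_k B(p_k) equals ∑_{k=1}^{n} (x_k − x_{k−1}) · y_k where x_0 = 0. -/
open MeasureTheory

lemma mono_of_step {x : ℕ → ℝ} {n : ℕ} (h : ∀ k, 1 ≤ k → k < n → x k < x (k + 1)) :
    ∀ i j, 1 ≤ i → i ≤ j → j ≤ n → x i ≤ x j := by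
  intro i j hi hij hjn
  induction j with
  | zero => omega
  | succ m ihm =>
    rcases Nat.eq_or_lt_of_le hij with rfl | hlt
    · exact le_refl _
    · have h1 : i ≤ m := by omega
      have h2 : 1 ≤ m := by omega
      exact (ihm h1 (by omega)).trans (le_of_lt (h m h2 (by omega)))

lemma anti_of_step {y : ℕ → ℝ} {n : ℕ} (h : ∀ k, 1 ≤ k → k < n → y (k + 1) < y k) :
    ∀ i j, 1 ≤ i → i ≤ j → j ≤ n → y j ≤ y i := by
  intro i j hi hij hjn
  have := mono_of_step (x := fun k => -y k) (n := n)
    (fun k hk1 hkn => by simpa using h k hk1 hkn) i j hi hij hjn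
  simpa using this

lemma area_aux (n : ℕ) (x y : ℕ → ℝ)
    (hx0 : x 0 = 0) (hx1 : 0 ≤ x 1)
    (hxmono : ∀ k, 1 ≤ k → k < n → x k < x (k + 1))
    (hyn : 0 ≤ y n)
    (hyanti : ∀ k, 1 ≤ k → k < n → y (k + 1) < y k) :
    volume (⋃ k ∈ Finset.Icc 1 n, Set.Icc (0:ℝ) (x k) ×ˢ Set.Icc (0:ℝ) (y k)) =
      ENNReal.ofReal (∑ k ∈ Finset.Icc 1 n, (x k - x (k - 1)) * y k) := by
  induction n with
  | zero => simp
  | succ n ih =>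
    have hrect : ∀ a b : ℝ, 0 ≤ a → 0 ≤ b →
        volume (Set.Icc (0:ℝ) a ×ˢ Set.Icc (0:ℝ) b) = ENNReal.ofReal (a * b) := by
      intro a b ha hb
      rw [Measure.volume_eq_prod, Measure.prod_prod, Real.volume_Icc, Real.volume_Icc,
        sub_zero, sub_zero, ENNReal.ofReal_mul ha]
    rcases Nat.eq_zero_or_pos n with rfl | hn1
    · have hy1 : 0 ≤ y 1 := hyn
      rw [show Finset.Icc 1 1 = {1} from rfl]
      simp only [Finset.set_biUnion_singleton, Finset.sum_singleton]
      rw [hrect _ _ hx1 hy1]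
      norm_num [hx0]
    -- n ≥ 1
    have hxmono' : ∀ k, 1 ≤ k → k < n → x k < x (k + 1) := fun k h1 h2 => hxmono k h1 (by omega)
    have hyanti' : ∀ k, 1 ≤ k → k < n → y (k + 1) < y k := fun k h1 h2 => hyanti k h1 (by omega)
    have hyn' : 0 ≤ y n := le_of_lt (lt_of_le_of_lt hyn (hyanti n hn1 (by omega)))
    have ihA := ih hxmono' hyn' hyanti'
    have hxm := mono_of_step hxmono
    have hya := anti_of_step hyanti
    have hxnpos : 0 ≤ x n := hx1.trans (hxm 1 n (le_refl 1) hn1 (by omega))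
    have hxn1pos : 0 ≤ x (n+1) := hx1.trans (hxm 1 (n+1) (le_refl 1) (by omega) (le_refl _))
    set A := ⋃ k ∈ Finset.Icc 1 n, Set.Icc (0:ℝ) (x k) ×ˢ Set.Icc (0:ℝ) (y k) with hAdef
    set B := Set.Icc (0:ℝ) (x (n+1)) ×ˢ Set.Icc (0:ℝ) (y (n+1)) with hBdef
    have hunion : (⋃ k ∈ Finset.Icc 1 (n+1), Set.Icc (0:ℝ) (x k) ×ˢ Set.Icc (0:ℝ) (y k)) = A ∪ B := by
      rw [show Finset.Icc 1 (n+1) = insert (n+1) (Finset.Icc 1 n) by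
        ext m; simp only [Finset.mem_Icc, Finset.mem_insert]; omega]
      rw [Finset.set_biUnion_insert]
      exact Set.union_comm _ _
    have hint : A ∩ B = Set.Icc (0:ℝ) (x n) ×ˢ Set.Icc (0:ℝ) (y (n+1)) := by
      ext ⟨a, b⟩
      simp only [hAdef, hBdef, Set.mem_inter_iff, Set.mem_iUnion, Set.mem_prod, Set.mem_Icc,
        Finset.mem_Icc]
      constructor
      · rintro ⟨⟨k, ⟨hk1, hkn⟩, ⟨ha0, hak⟩, _⟩, ⟨_, _⟩, hb0, hbn⟩
        exact ⟨⟨ha0, hak.trans (hxm k n hk1 hkn (by omega))⟩, hb0, hbn⟩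
      · rintro ⟨⟨ha0, han⟩, hb0, hb⟩
        exact ⟨⟨n, ⟨hn1, le_refl n⟩, ⟨ha0, han⟩, hb0,
            hb.trans (le_of_lt (hyanti n hn1 (by omega)))⟩,
          ⟨ha0, han.trans (le_of_lt (hxmono n hn1 (by omega)))⟩, hb0, hb⟩
    have hBmeas : MeasurableSet B := (measurableSet_Icc.prod measurableSet_Icc)
    have hkey := measure_union_add_inter (μ := volume) A hBmeas
    rw [hint, ihA, hrect _ _ hxn1pos hyn, hrect _ _ hxnpos hyn] at hkey
    have hS : 0 ≤ ∑ k ∈ Finset.Icc 1 n, (x k - x (k - 1)) * y k := by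
      apply Finset.sum_nonneg
      intro k hk
      rw [Finset.mem_Icc] at hk
      have hxk : x (k - 1) ≤ x k := by
        rcases Nat.eq_or_lt_of_le hk.1 with h1 | h1
        · rw [← h1]; simpa [hx0] using hx1
        · exact hxm (k-1) k (by omega) (by omega) (by omega)
      have hyk : 0 ≤ y k := hyn'.trans (hya k n hk.1 hk.2 (by omega))
      exact mul_nonneg (sub_nonneg.mpr hxk) hyk
    rw [hunion, Finset.sum_Icc_succ_top (by omega : 1 ≤ n+1)]
    have hterm : (0:ℝ) ≤ (x (n+1) - x (n+1-1)) * y (n+1) := by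
      have : x n ≤ x (n+1) := le_of_lt (hxmono n hn1 (by omega))
      simpa using mul_nonneg (sub_nonneg.mpr this) hyn
    have hmul1 : 0 ≤ x (n+1) * y (n+1) := mul_nonneg hxn1pos hyn
    have hmul2 : 0 ≤ x n * y (n+1) := mul_nonneg hxnpos hyn
    have hfin : ENNReal.ofReal (x n * y (n+1)) ≠ ⊤ := ENNReal.ofReal_ne_top
    rw [← ENNReal.add_left_inj hfin, hkey, ← ENNReal.ofReal_add hS hmul1,
      ← ENNReal.ofReal_add (by positivity) hmul2]
    congr 1
    simp only [Nat.add_sub_cancel]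
    ring

/-- 2D hypervolume formula: for a 2D Pareto front `p_k = (x_k, y_k)`, `k = 1, …, n`, with
`0 ≤ x_1 < ⋯ < x_n ≤ 1` and `1 ≥ y_1 > ⋯ > y_n ≥ 0`, the area of `⋃_k [0,x_k] × [0,y_k]`
equals `∑_{k=1}^n (x_k − x_{k−1})·y_k` where `x_0 = 0`. -/
theorem area_pareto_front_2d (n : ℕ) (x y : ℕ → ℝ)
    (hx0 : x 0 = 0)
    (hx1 : 0 ≤ x 1) (hxn : x n ≤ 1)
    (hxmono : ∀ k, 1 ≤ k → k < n → x k < x (k + 1))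
    (hy1 : y 1 ≤ 1) (hyn : 0 ≤ y n)
    (hyanti : ∀ k, 1 ≤ k → k < n → y (k + 1) < y k) :
    volume (⋃ k ∈ Finset.Icc 1 n, Set.Icc (0:ℝ) (x k) ×ˢ Set.Icc (0:ℝ) (y k)) =
      ENNReal.ofReal (∑ k ∈ Finset.Icc 1 n, (x k - x (k - 1)) * y k) := by
  exact area_aux n x y hx0 hx1 hxmono hyn hyanti
end

section
/- QHV pivot decomposition in 2D: let p = (a,b) ∈ [0,1]^2 be a pivot and S a finite set of points in [0,1]^2. Then the area of B(p) ∪ ⋃_{q∈S} B(q) equals a·b plus the area of the union over q ∈ S of the rectangles B(q) \ B(p) restricted to the region {x > a} plus the area restricted to {y > b}, and these two regions {x > a, y ≤ 1} and {y > b} overlap only in the quadrant {x > a, y > b}; in particular if no point of S dominates p, every B(q) \ B(p) is contained in {x > a} ∪ {y > b}. -/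
open MeasureTheory

/-- 2D box from the origin to `q`. -/
def Box2 (q : ℝ × ℝ) : Set (ℝ × ℝ) := Set.Icc 0 q.1 ×ˢ Set.Icc 0 q.2

/-- QHV pivot decomposition in 2D: for a pivot `p = (a,b) ∈ [0,1]²` and a finite set `S`
of points of `[0,1]²` none of which dominates `p`, the area of `B(p) ∪ ⋃_{q∈S} B(q)`
splits as `a·b` plus the parts of `⋃ (B(q) \ B(p))` in the half-planes `{x > a}` and
`{y > b}`; the regions `{x > a, y ≤ 1}` and `{y > b}` overlap only in `{x > a, y > b}`,
and each `B(q) \ B(p)` is contained in `{x > a} ∪ {y > b}`. -/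
theorem qhv_pivot_decomposition_2d (a b : ℝ) (ha : a ∈ Set.Icc (0:ℝ) 1)
    (hb : b ∈ Set.Icc (0:ℝ) 1) (S : Finset (ℝ × ℝ))
    (hS : ∀ q ∈ S, q.1 ∈ Set.Icc (0:ℝ) 1 ∧ q.2 ∈ Set.Icc (0:ℝ) 1)
    (hnd : ∀ q ∈ S, ¬ ((a ≤ q.1 ∧ b ≤ q.2) ∧ q ≠ (a, b))) :
    volume (Box2 (a, b) ∪ ⋃ q ∈ S, Box2 q) =
        ENNReal.ofReal (a * b)
          + volume ((⋃ q ∈ S, Box2 q \ Box2 (a, b)) ∩ {x : ℝ × ℝ | a < x.1})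
          + volume ((⋃ q ∈ S, Box2 q \ Box2 (a, b)) ∩ {x : ℝ × ℝ | b < x.2}) ∧
    ({x : ℝ × ℝ | a < x.1 ∧ x.2 ≤ 1} ∩ {x : ℝ × ℝ | b < x.2})
        ⊆ {x : ℝ × ℝ | a < x.1 ∧ b < x.2} ∧
    ∀ q ∈ S, Box2 q \ Box2 (a, b) ⊆ {x : ℝ × ℝ | a < x.1} ∪ {x : ℝ × ℝ | b < x.2} := by
  obtain ⟨ha0, ha1⟩ := ha
  obtain ⟨hb0, hb1⟩ := hb
  have hmBox : ∀ q : ℝ × ℝ, MeasurableSet (Box2 q) := fun q =>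
    measurableSet_Icc.prod measurableSet_Icc
  set D : Set (ℝ × ℝ) := ⋃ q ∈ S, Box2 q \ Box2 (a, b) with hDdef
  have hmD : MeasurableSet D :=
    Finset.measurableSet_biUnion S fun q _ => (hmBox q).diff (hmBox _)
  have hsub : ∀ q ∈ S, Box2 q \ Box2 (a, b) ⊆
      {x : ℝ × ℝ | a < x.1} ∪ {x : ℝ × ℝ | b < x.2} := by
    intro q hq x hx
    obtain ⟨⟨⟨hx1, _⟩, ⟨hx2, _⟩⟩, hxnot⟩ := hx
    by_contra h
    simp only [Set.mem_union, Set.mem_setOf_eq, not_or, not_lt] at h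
    exact hxnot ⟨⟨hx1, h.1⟩, ⟨hx2, h.2⟩⟩
  refine ⟨?_, ?_, hsub⟩
  · -- main measure identity
    have hDdiff : D = (⋃ q ∈ S, Box2 q) \ Box2 (a, b) := by
      simp [hDdef, Set.iUnion_diff]
    have hunion : Box2 (a, b) ∪ ⋃ q ∈ S, Box2 q = Box2 (a, b) ∪ D := by
      rw [hDdiff, Set.union_diff_self]
    have hdisj : Disjoint (Box2 (a, b)) D := by
      rw [hDdiff]; exact Set.disjoint_sdiff_right
    have hDAB : D ∩ {x : ℝ × ℝ | a < x.1} ∩ {x : ℝ × ℝ | b < x.2} = ∅ := by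
      ext x
      simp only [Set.mem_inter_iff, Set.mem_empty_iff_false, iff_false, not_and,
        Set.mem_setOf_eq]
      rintro ⟨hxD, hxa⟩ hxb
      simp only [hDdef, Set.mem_iUnion] at hxD
      obtain ⟨q, hq, ⟨⟨h1, h2⟩, _⟩⟩ := hxD
      refine hnd q hq ⟨⟨le_trans hxa.le h1.2, le_trans hxb.le h2.2⟩, ?_⟩
      rintro rfl
      exact absurd h1.2 (not_le.mpr hxa)
    have hDsplit : D = (D ∩ {x : ℝ × ℝ | a < x.1}) ∪ (D ∩ {x : ℝ × ℝ | b < x.2}) := by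
      rw [← Set.inter_union_distrib_left]
      refine (Set.inter_eq_left.mpr ?_).symm
      intro x hx
      simp only [hDdef, Set.mem_iUnion] at hx
      obtain ⟨q, hq, hx⟩ := hx
      exact hsub q hq hx
    have hdisj2 : Disjoint (D ∩ {x : ℝ × ℝ | a < x.1}) (D ∩ {x : ℝ × ℝ | b < x.2}) := by
      rw [Set.disjoint_iff_inter_eq_empty]
      rw [← hDAB]
      ext x; simp only [Set.mem_inter_iff, Set.mem_empty_iff_false]; tauto
    have hvp : volume (Box2 (a, b)) = ENNReal.ofReal (a * b) := by
      rw [Box2, Measure.volume_eq_prod, Measure.prod_prod, Real.volume_Icc,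
        Real.volume_Icc, sub_zero, sub_zero, ← ENNReal.ofReal_mul ha0]
    have hvolD : volume D = volume (D ∩ {x : ℝ × ℝ | a < x.1})
        + volume (D ∩ {x : ℝ × ℝ | b < x.2}) := by
      nth_rewrite 1 [hDsplit]
      exact measure_union hdisj2
        (hmD.inter (measurableSet_lt measurable_const measurable_snd))
    rw [hunion, measure_union hdisj hmD, hvp, hvolD, add_assoc]
  · intro x hx
    exact ⟨hx.1.1, hx.2⟩
end
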